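/- Let G be a positive linearly ordered cancellative monoid with identity \mu and R a ring. If e = e_0 g_0 + ... + e_m g_m is an idempotent of the monoid ring R[G] with g_0 < ... < g_m, then every coefficient e_i lies in the two-sided ideal R e_0 R, where e_0 is the coefficient at the identity \mu. -/

import Mathlib

/-- Let `G` be a positive linearly ordered cancellative monoid and `R` a ring. If
`e = e₀g₀ + ⋯ + eₘgₘ` is an idempotent of the monoid ring `R[G]` with `g₀ < ⋯ < gₘ`
(and nonzero coefficients), then every coefficient `eᵢ` lies in the two-sided ideal
`R e₀ R`, where `e₀` is the coefficient at the identity. -/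
theorem monoidAlgebra_idempotent_coeff_mem_span
    {R : Type*} [Ring R] {G : Type*} [Monoid G] [LinearOrder G]
    [CovariantClass G G (· * ·) (· < ·)]
    [CovariantClass G G (Function.swap (· * ·)) (· < ·)]
    [IsCancelMul G]
    (hpos : ∀ s : G, 1 ≤ s)
    (m : ℕ) (g : Fin (m + 1) → G) (hg : StrictMono g)
    (c : Fin (m + 1) → R) (hc : ∀ i, c i ≠ 0)
    (e : MonoidAlgebra R G)
    (hrep : e = ∑ i, MonoidAlgebra.single (g i) (c i))
    (he : e * e = e) :
    ∀ i, c i ∈ TwoSidedIdeal.span {c 0} := by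
  have hcoef : ∀ x : G, e.coeff x = ∑ i, if g i = x then c i else 0 := by
    intro x
    rw [hrep, MonoidAlgebra.coeff_sum, Finsupp.finset_sum_apply]
    exact Finset.sum_congr rfl fun i _ => Finsupp.single_apply
  have hei : ∀ i, e.coeff (g i) = c i := by
    intro i
    rw [hcoef, Finset.sum_eq_single i]
    · simp
    · intro j _ hji
      simp [hg.injective.ne hji]
    · simp
  have hsq : ∀ x : G, e.coeff x = ∑ j, ∑ k, if g j * g k = x then c j * c k else 0 := by
    intro x
    conv_lhs => rw [← he]
    rw [hrep, Finset.sum_mul_sum]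
    simp only [MonoidAlgebra.single_mul_single]
    rw [MonoidAlgebra.coeff_sum, Finsupp.finset_sum_apply]
    refine Finset.sum_congr rfl fun j _ => ?_
    rw [MonoidAlgebra.coeff_sum, Finsupp.finset_sum_apply]
    exact Finset.sum_congr rfl fun k _ => Finsupp.single_apply
  have key : ∀ i, c i = ∑ j, ∑ k, if g j * g k = g i then c j * c k else 0 := by
    intro i; rw [← hei i, hsq]
  have hg0 : g 0 = 1 := by
    by_contra h
    have h1 : 1 < g 0 := lt_of_le_of_ne (hpos _) (Ne.symm h)
    have hkey := key 0
    rw [Finset.sum_eq_zero] at hkey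
    · exact hc 0 hkey
    intro j _
    rw [Finset.sum_eq_zero]
    intro k _
    have hjk : g 0 < g j * g k :=
      calc g 0 ≤ g j := hg.monotone (Fin.zero_le j)
      _ = g j * 1 := (mul_one _).symm
      _ < g j * g k := mul_lt_mul_right (lt_of_lt_of_le h1 (hg.monotone (Fin.zero_le k))) _
    rw [if_neg hjk.ne']
  have main : ∀ n : ℕ, ∀ i : Fin (m + 1), (i : ℕ) < n → c i ∈ TwoSidedIdeal.span {c 0} := by
    intro n
    induction n with
    | zero => intro i hi; exact absurd hi (Nat.not_lt_zero _)
    | succ n ih =>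
      intro i _hi
      rcases Nat.lt_or_ge (i : ℕ) n with hlt | hge
      · exact ih i hlt
      rw [key i]
      refine sum_mem fun j _ => sum_mem fun k _ => ?_
      split_ifs with h
      · rcases eq_or_ne j 0 with rfl | hj
        · exact TwoSidedIdeal.mul_mem_right _ _ _ (TwoSidedIdeal.subset_span rfl)
        rcases eq_or_ne k 0 with rfl | hk
        · exact TwoSidedIdeal.mul_mem_left _ _ _ (TwoSidedIdeal.subset_span rfl)
        have hjlt : j < i := by
          apply hg.lt_iff_lt.mp
          calc g j = g j * 1 := (mul_one _).symm
          _ < g j * g k := by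
              refine mul_lt_mul_right ?_ _
              rw [← hg0]
              exact hg (Fin.pos_of_ne_zero hk)
          _ = g i := h
        exact TwoSidedIdeal.mul_mem_right _ _ _
          (ih j (by have := Fin.lt_iff_val_lt_val.mp hjlt; omega))
      · exact zero_mem _
  exact fun i => main (i + 1) i (Nat.lt_succ_self _)
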